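/- Let K be a nonempty set and let 𝒜 be the set of atoms of ℙ^K. The semigroup homomorphism φ from the free semigroup on 𝒜 to ℙ^K determined by φ(x_a) = a for each atom a (obtained via the universal property of the free semigroup, with ℙ^K regarded multiplicatively via Multiplicative) is surjective. -/

import Mathlib

/-- The set of atoms of `ℙ^K`. -/
def PAtoms (K : Type*) : Type _ := {a : K → ℕ+ // ¬∃ b c : K → ℕ+, a = b + c}

/-- The homomorphism `φ` from the free semigroup on the set `𝒜` of atoms of
`ℙ^K` to `ℙ^K` (regarded multiplicatively) sending each letter `x_a` to the
atom `a` is surjective. -/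
theorem phi_surjective {K : Type*} [Nonempty K] :
    Function.Surjective
      (FreeSemigroup.lift
        (fun a : PAtoms K => Multiplicative.ofAdd a.1) :
        FreeSemigroup (PAtoms K) →ₙ* Multiplicative (K → ℕ+)) := by
  classical
  obtain ⟨k₀⟩ := ‹Nonempty K›
  suffices h : ∀ n (g : K → ℕ+), (g k₀ : ℕ) ≤ n →
      ∃ x, (FreeSemigroup.lift (fun a : PAtoms K => Multiplicative.ofAdd a.1)) x
        = Multiplicative.ofAdd g by
    intro f
    exact h (Multiplicative.toAdd f k₀) (Multiplicative.toAdd f) le_rfl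
  intro n
  induction n with
  | zero =>
    intro g hg
    have := (g k₀).pos
    omega
  | succ n ih =>
    intro g hg
    by_cases hex : ∃ k, g k = 1
    · refine ⟨FreeSemigroup.of ⟨g, ?_⟩, rfl⟩
      rintro ⟨b, c, rfl⟩
      obtain ⟨k, hk⟩ := hex
      have h1 : ((b k : ℕ)) + (c k : ℕ) = 1 := by exact_mod_cast hk
      have := (b k).pos
      have := (c k).pos
      omega
    · push_neg at hex
      have h2 : ∀ k, 2 ≤ (g k : ℕ) := by
        intro k
        have h1 := (g k).pos
        have hne : (g k : ℕ) ≠ 1 := fun h => hex k (PNat.coe_injective h)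
        omega
      set g' : K → ℕ+ := fun k => ⟨(g k : ℕ) - 1, by have := h2 k; omega⟩ with hg'
      obtain ⟨x', hx'⟩ := ih g' (by have := h2 k₀; simp only [hg', PNat.mk_ofNat]; simp; omega)
      have hatom : ¬∃ b c : K → ℕ+, (1 : K → ℕ+) = b + c := by
        rintro ⟨b, c, h⟩
        have h1 : (1 : ℕ+) = b k₀ + c k₀ := congrFun h k₀
        have h2 : (1 : ℕ) = (b k₀ : ℕ) + (c k₀ : ℕ) := by exact_mod_cast h1
        have := (b k₀).pos
        have := (c k₀).pos
        omega
      refine ⟨FreeSemigroup.of ⟨(1 : K → ℕ+), hatom⟩ * x', ?_⟩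
      rw [map_mul, hx', show (FreeSemigroup.lift fun a : PAtoms K => Multiplicative.ofAdd a.1) (FreeSemigroup.of ⟨(1 : K → ℕ+), hatom⟩) = Multiplicative.ofAdd (1 : K → ℕ+) from rfl, ← ofAdd_add]
      congr 1
      funext k
      apply PNat.coe_injective
      have := h2 k
      show 1 + ((g k : ℕ) - 1) = (g k : ℕ)
      omega
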